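/- Let A and B be finite dimensional algebras over an algebraically closed field k, and let Q be a finite dimensional A-B-bimodule. If the functor Q ⊗_B (-) from finite dimensional left B-modules to finite dimensional left A-modules sends every B-module to a projective A-module, then the functor Hom_A(Q, -) sends every short exact sequence of finite dimensional left A-modules to a split short exact sequence of left B-modules. -/

import Mathlib

open scoped TensorProduct

/-- The tensor product `Q ⊗_B M` of an `A`-`B`-bimodule `Q` and a left `B`-module `M`,
realised as the quotient of `Q ⊗ₖ M` by the balancing relations
`(q·b) ⊗ m - q ⊗ (b·m)`.  It is a left `A`-module via `Q`. -/
abbrev TensorOver (k : Type) [Field k] (B : Type) [Ring B]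
    (A : Type) [Ring A] (Q : Type) [AddCommGroup Q] [Module k Q] [Module A Q]
    [Module Bᵐᵒᵖ Q] [SMulCommClass k A Q]
    (M : Type) [AddCommGroup M] [Module k M] [Module B M] : Type :=
  (Q ⊗[k] M) ⧸ (Submodule.span A {x : Q ⊗[k] M |
    ∃ (q : Q) (b : B) (m : M), x = (MulOpposite.op b • q) ⊗ₜ[k] m - q ⊗ₜ[k] (b • m)})

/-- The right action of `b : B` on the `A`-`B`-bimodule `Q`, as an `A`-linear endomorphism. -/
def rAct {A B Q : Type} [Ring A] [Ring B] [AddCommGroup Q] [Module A Q]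
    [Module Bᵐᵒᵖ Q] [SMulCommClass A Bᵐᵒᵖ Q] (b : B) : Q →ₗ[A] Q where
  toFun q := MulOpposite.op b • q
  map_add' _ _ := smul_add _ _ _
  map_smul' a q := (smul_comm a (MulOpposite.op b) q).symm

lemma rAct_apply {A B Q : Type} [Ring A] [Ring B] [AddCommGroup Q] [Module A Q]
    [Module Bᵐᵒᵖ Q] [SMulCommClass A Bᵐᵒᵖ Q] (b : B) (q : Q) :
    (rAct b : Q →ₗ[A] Q) q = MulOpposite.op b • q := rfl

theorem stmt_0 (k A B : Type) [Field k] [IsAlgClosed k]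
    [Ring A] [Algebra k A] [FiniteDimensional k A]
    [Ring B] [Algebra k B] [FiniteDimensional k B]
    (Q : Type) [AddCommGroup Q] [Module k Q] [Module A Q] [Module Bᵐᵒᵖ Q]
    [IsScalarTower k A Q] [IsScalarTower k Bᵐᵒᵖ Q] [SMulCommClass A Bᵐᵒᵖ Q]
    [FiniteDimensional k Q]
    (hproj : ∀ (M : Type) [AddCommGroup M] [Module k M] [Module B M] [IsScalarTower k B M]
      [FiniteDimensional k M], Module.Projective A (TensorOver k B A Q M))
    (X Y Z : Type)
    [AddCommGroup X] [Module k X] [Module A X] [IsScalarTower k A X] [FiniteDimensional k X]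
    [AddCommGroup Y] [Module k Y] [Module A Y] [IsScalarTower k A Y] [FiniteDimensional k Y]
    [AddCommGroup Z] [Module k Z] [Module A Z] [IsScalarTower k A Z] [FiniteDimensional k Z]
    (f : X →ₗ[A] Y) (g : Y →ₗ[A] Z)
    (hf : Function.Injective f) (hg : Function.Surjective g)
    (hfg : ∀ y : Y, g y = 0 ↔ y ∈ Set.range f) :
    Function.Injective (fun h : Q →ₗ[A] X => f ∘ₗ h) ∧
    Function.Surjective (fun h : Q →ₗ[A] Y => g ∘ₗ h) ∧
    (∀ h : Q →ₗ[A] Y, g ∘ₗ h = 0 ↔ ∃ h' : Q →ₗ[A] X, f ∘ₗ h' = h) ∧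
    ∃ s : (Q →ₗ[A] Z) →ₗ[k] (Q →ₗ[A] Y),
      (∀ h : Q →ₗ[A] Z, g ∘ₗ s h = h) ∧
      (∀ (b : B) (h : Q →ₗ[A] Z), s (h ∘ₗ rAct b) = s h ∘ₗ rAct b) := by
  classical
  -- the B-module structure on Hom_A(Q,Z)
  letI instSMul : SMul B (Q →ₗ[A] Z) := ⟨fun b h => h ∘ₗ rAct b⟩
  have smul_def : ∀ (b : B) (h : Q →ₗ[A] Z), b • h = h ∘ₗ rAct b := fun _ _ => rfl
  have smul_apply : ∀ (b : B) (h : Q →ₗ[A] Z) (q : Q),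
      (b • h) q = h (MulOpposite.op b • q) := fun _ _ _ => rfl
  letI instMod : Module B (Q →ₗ[A] Z) :=
    { one_smul := fun h => by
        ext q; rw [smul_apply]; simp
      mul_smul := fun b₁ b₂ h => by
        ext q; rw [smul_apply, smul_apply, smul_apply, MulOpposite.op_mul, mul_smul]
      smul_zero := fun b => by ext q; rw [smul_apply]; simp
      smul_add := fun b h₁ h₂ => by
        ext q; rw [smul_apply]; simp [smul_apply]
      add_smul := fun b₁ b₂ h => by
        ext q; rw [smul_apply]
        simp [MulOpposite.op_add, add_smul, smul_apply]
      zero_smul := fun h => by ext q; rw [smul_apply]; simp }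
  haveI instTow : IsScalarTower k B (Q →ₗ[A] Z) := by
    constructor
    intro c b h
    ext q
    rw [smul_apply]
    have h1 : MulOpposite.op (c • b) • q = c • (MulOpposite.op b • q) := by
      rw [MulOpposite.op_smul, smul_assoc]
    rw [h1, h.map_smul_of_tower]
    rfl
  haveI instFD : FiniteDimensional k (Q →ₗ[A] Z) := by
    let ι : (Q →ₗ[A] Z) →ₗ[k] (Q →ₗ[k] Z) :=
      { toFun := fun h => h.restrictScalars k
        map_add' := fun _ _ => rfl
        map_smul' := fun _ _ => rfl }
    refine FiniteDimensional.of_injective ι ?_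
    intro h₁ h₂ e
    ext q
    exact LinearMap.congr_fun e q
  -- the evaluation map on the tensor product
  let ev : Q →ₗ[A] ((Q →ₗ[A] Z) →ₗ[k] Z) :=
    { toFun := fun q =>
        { toFun := fun h => h q
          map_add' := fun _ _ => rfl
          map_smul' := fun _ _ => rfl }
      map_add' := fun q₁ q₂ => by ext h; simp
      map_smul' := fun a q => by ext h; simp }
  let ε : (Q ⊗[k] (Q →ₗ[A] Z)) →ₗ[A] Z := TensorProduct.AlgebraTensorModule.lift ev
  have ε_tmul : ∀ (q : Q) (h : Q →ₗ[A] Z), ε (q ⊗ₜ[k] h) = h q := fun q h =>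
    TensorProduct.AlgebraTensorModule.lift_tmul ev q h
  set Rel : Submodule A (Q ⊗[k] (Q →ₗ[A] Z)) := Submodule.span A {x : Q ⊗[k] (Q →ₗ[A] Z) |
    ∃ (q : Q) (b : B) (m : Q →ₗ[A] Z),
      x = (MulOpposite.op b • q) ⊗ₜ[k] m - q ⊗ₜ[k] (b • m)} with hRel
  have hker : Rel ≤ LinearMap.ker ε := by
    rw [hRel, Submodule.span_le]
    rintro x ⟨q, b, m, rfl⟩
    simp only [SetLike.mem_coe, LinearMap.mem_ker, map_sub, ε_tmul]
    rw [smul_apply]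
    abel
  let εq : ((Q ⊗[k] (Q →ₗ[A] Z)) ⧸ Rel) →ₗ[A] Z := Submodule.liftQ Rel ε hker
  haveI : Module.Projective A ((Q ⊗[k] (Q →ₗ[A] Z)) ⧸ Rel) := hproj (Q →ₗ[A] Z)
  obtain ⟨L, hL⟩ := Module.projective_lifting_property g εq hg
  -- the canonical map q ↦ [q ⊗ h]
  let ι : (Q →ₗ[A] Z) → (Q →ₗ[A] ((Q ⊗[k] (Q →ₗ[A] Z)) ⧸ Rel)) := fun h =>
    Rel.mkQ ∘ₗ
    { toFun := fun q => q ⊗ₜ[k] h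
      map_add' := fun q₁ q₂ => by rw [TensorProduct.add_tmul]
      map_smul' := fun a q => by simp [TensorProduct.smul_tmul'] }
  have ι_apply : ∀ (h : Q →ₗ[A] Z) (q : Q), ι h q = Rel.mkQ (q ⊗ₜ[k] h) := fun _ _ => rfl
  have hsec : ∃ s : (Q →ₗ[A] Z) →ₗ[k] (Q →ₗ[A] Y),
      (∀ h : Q →ₗ[A] Z, g ∘ₗ s h = h) ∧
      (∀ (b : B) (h : Q →ₗ[A] Z), s (h ∘ₗ rAct b) = s h ∘ₗ rAct b) := by
    refine ⟨{ toFun := fun h => L ∘ₗ ι h, map_add' := ?_, map_smul' := ?_ }, ?_, ?_⟩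
    · intro h₁ h₂
      ext q
      simp only [LinearMap.coe_mk, AddHom.coe_mk, LinearMap.comp_apply, LinearMap.add_apply, ι_apply]
      rw [TensorProduct.tmul_add, map_add, map_add]
    · intro c h
      ext q
      simp only [LinearMap.coe_mk, AddHom.coe_mk, LinearMap.comp_apply, RingHom.id_apply, LinearMap.smul_apply, ι_apply]
      rw [TensorProduct.tmul_smul, Rel.mkQ.map_smul_of_tower, L.map_smul_of_tower]
    · intro h
      ext q
      simp only [LinearMap.coe_mk, AddHom.coe_mk, LinearMap.comp_apply, ι_apply]
      have := LinearMap.congr_fun hL (Rel.mkQ (q ⊗ₜ[k] h))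
      rw [LinearMap.comp_apply] at this
      rw [this]
      show ε (q ⊗ₜ[k] h) = h q
      exact ε_tmul q h
    · intro b h
      ext q
      simp only [LinearMap.coe_mk, AddHom.coe_mk, LinearMap.comp_apply, ι_apply, rAct_apply]
      congr 1
      rw [Submodule.mkQ_apply, Submodule.mkQ_apply, Submodule.Quotient.eq]
      have hgen : (MulOpposite.op b • q) ⊗ₜ[k] h - q ⊗ₜ[k] (b • h) ∈ Rel := by
        rw [hRel]
        exact Submodule.subset_span ⟨q, b, h, rfl⟩
      have heq : q ⊗ₜ[k] (h ∘ₗ rAct b) - (MulOpposite.op b • q) ⊗ₜ[k] h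
          = -((MulOpposite.op b • q) ⊗ₜ[k] h - q ⊗ₜ[k] (b • h)) := by
        rw [smul_def]; abel
      rw [heq]
      exact neg_mem hgen
  obtain ⟨s, hs1, hs2⟩ := hsec
  refine ⟨?_, ?_, ?_, ⟨s, hs1, hs2⟩⟩
  · intro h₁ h₂ hh
    ext q
    exact hf (LinearMap.congr_fun hh q)
  · intro h
    exact ⟨s h, hs1 h⟩
  · intro h
    constructor
    · intro h0
      have hmem : ∀ q, h q ∈ LinearMap.range f := by
        intro q
        exact LinearMap.mem_range.mpr ((hfg (h q)).1 (LinearMap.congr_fun h0 q))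
      let e : X ≃ₗ[A] LinearMap.range f := LinearEquiv.ofInjective f hf
      refine ⟨e.symm.toLinearMap ∘ₗ LinearMap.codRestrict (LinearMap.range f) h hmem, ?_⟩
      ext q
      simp only [LinearMap.comp_apply, LinearEquiv.coe_coe]
      have h2 : LinearMap.codRestrict (LinearMap.range f) h hmem q = ⟨h q, hmem q⟩ := rfl
      rw [h2]
      have h1 : f (e.symm ⟨h q, hmem q⟩) = ((e (e.symm ⟨h q, hmem q⟩)) : Y) :=
        (LinearEquiv.ofInjective_apply f _).symm
      rw [h1, e.apply_symm_apply]
    · rintro ⟨h', rfl⟩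
      ext q
      simp only [LinearMap.comp_apply, LinearMap.zero_apply]
      exact (hfg (f (h' q))).2 ⟨h' q, rfl⟩
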